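/- Let G be a finite group and H ≤ G a subgroup such that G acts faithfully on G/H. If the pair (G,H) is doubly homogeneous, then it is ℚ-trivial. -/

import Mathlib

noncomputable section

open Polynomial

/-- `z` is a root of rational: some positive power of `z` is rational. -/
def IsRootOfRational (z : ℂ) : Prop := ∃ k : ℕ, 0 < k ∧ ∃ q : ℚ, z ^ k = (q : ℂ)

/-- `z` is a rational number (viewed in `ℂ`). -/
def IsRat (z : ℂ) : Prop := ∃ q : ℚ, z = (q : ℂ)

/-- The Galois-like group `G_f`: permutations of the (indexed) roots preserving all
multiplicative relations. -/
def GaloisLike {ι : Type*} [Fintype ι] (r : ι → ℂ) : Set (Equiv.Perm ι) :=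
  {σ | ∀ v : ι → ℤ, (∏ i, r i ^ v i) = 1 → (∏ i, r (σ i) ^ v i) = 1}

/-- The Galois-like group `G_f^B`. -/
def GaloisLikeB {ι : Type*} [Fintype ι] (r : ι → ℂ) : Set (Equiv.Perm ι) :=
  {σ | ∀ v : ι → ℤ, IsRat (∏ i, r i ^ v i) → (∏ i, r (σ i) ^ v i) = ∏ i, r i ^ v i}

/-- The Galois-like group `G_f^ℚ`. -/
def GaloisLikeQ {ι : Type*} [Fintype ι] (r : ι → ℂ) : Set (Equiv.Perm ι) :=
  {σ | ∀ v : ι → ℤ, IsRat (∏ i, r i ^ v i) → IsRat (∏ i, r (σ i) ^ v i)}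

/-- The exponent lattice of the vector `w` is trivial. -/
def VecLatticeTrivial {ι : Type*} [Fintype ι] (w : ι → ℂ) : Prop :=
  ∀ u : ι → ℤ, (∏ i, w i ^ u i) = 1 → ∀ i j : ι, u i = u j

/-- The lattice `R_w^ℚ` of the vector `w` is trivial. -/
def VecLatticeQTrivial {ι : Type*} [Fintype ι] (w : ι → ℂ) : Prop :=
  ∀ u : ι → ℤ, IsRat (∏ i, w i ^ u i) → ∀ i j : ι, u i = u j

/-- A subset `M ⊆ ℚ[G/H]` is ℚ-admissible: there is `μ ∈ ℚ[G]` with stabilizer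
(under left multiplication) exactly `H` such that `mμ = 0` for all `m ∈ M`
(here `Σ_{g∈G} m(ḡ) • gμ = |H| ⋅ (mμ)`, so we express `mμ = 0` this way). -/
def IsQAdmissible {G : Type*} [Group G] (H : Subgroup G) (M : Set ((G ⧸ H) →₀ ℚ)) : Prop :=
  ∃ μ : MonoidAlgebra ℚ G,
    (∀ g : G, MonoidAlgebra.single g (1 : ℚ) * μ = μ ↔ g ∈ H) ∧
    ∀ m ∈ M, (∑ᶠ g : G, m (QuotientGroup.mk g) • (MonoidAlgebra.single g (1 : ℚ) * μ)) = 0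

/-- A ℚ-subspace of `ℚ[G/H]` is a `ℚ[G]`-submodule iff it is stable under the
permutation action of `G` on `G/H`. -/
def IsGStable {G : Type*} [Group G] (H : Subgroup G) (M : Submodule ℚ ((G ⧸ H) →₀ ℚ)) : Prop :=
  ∀ g : G, ∀ m ∈ M, Finsupp.mapDomain (fun x : G ⧸ H => g • x) m ∈ M

/-- The pair `(G,H)` is ℚ-trivial: the only ℚ-admissible `ℚ[G]`-submodules of `ℚ[G/H]`
are `0` and `V₁` (the line of constant coefficient vectors). -/
def QTrivialPair {G : Type*} [Group G] (H : Subgroup G) : Prop :=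
  ∀ M : Submodule ℚ ((G ⧸ H) →₀ ℚ), IsGStable H M →
    IsQAdmissible H (M : Set ((G ⧸ H) →₀ ℚ)) →
    M = ⊥ ∨ (M : Set ((G ⧸ H) →₀ ℚ)) = {m | ∃ a : ℚ, ∀ x, m x = a}

/-- The action of `G` on `G/H` is transitive. -/
def PairTransitive {G : Type*} [Group G] (H : Subgroup G) : Prop :=
  ∀ x y : G ⧸ H, ∃ g : G, g • x = y

/-- The action of `G` on `G/H` is doubly transitive. -/
def PairDoublyTransitive {G : Type*} [Group G] (H : Subgroup G) : Prop :=
  ∀ x₁ x₂ y₁ y₂ : G ⧸ H, x₁ ≠ x₂ → y₁ ≠ y₂ → ∃ g : G, g • x₁ = y₁ ∧ g • x₂ = y₂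

/-- The action of `G` on `G/H` is doubly homogeneous. -/
def PairDoublyHomogeneous {G : Type*} [Group G] (H : Subgroup G) : Prop :=
  ∀ x₁ x₂ y₁ y₂ : G ⧸ H, x₁ ≠ x₂ → y₁ ≠ y₂ →
    ∃ g : G, ({g • x₁, g • x₂} : Set (G ⧸ H)) = {y₁, y₂}

/-- A set of permutations of `ι` acts transitively. -/
def SetTransitive {ι : Type*} (S : Set (Equiv.Perm ι)) : Prop :=
  ∀ i j : ι, ∃ σ ∈ S, σ i = j

/-- A set of permutations of `ι` acts doubly transitively. -/
def SetDoublyTransitive {ι : Type*} (S : Set (Equiv.Perm ι)) : Prop :=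
  ∀ i j k l : ι, i ≠ j → k ≠ l → ∃ σ ∈ S, σ i = k ∧ σ j = l

/-- A set of permutations of `ι` acts doubly homogeneously. -/
def SetDoublyHomogeneous {ι : Type*} (S : Set (Equiv.Perm ι)) : Prop :=
  ∀ i j k l : ι, i ≠ j → k ≠ l → ∃ σ ∈ S, ({σ i, σ j} : Set ι) = {k, l}




section Aux

lemma key_lemma {G : Type*} [Group G] [Finite G] (H : Subgroup G)
    (h2h : PairDoublyHomogeneous H) (M : Submodule ℚ ((G ⧸ H) →₀ ℚ))
    (hst : IsGStable H M) {m : (G ⧸ H) →₀ ℚ} (hm : m ∈ M) {x y : G ⧸ H}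
    (hxy : m x ≠ m y) :
    Finsupp.single x (1:ℚ) - Finsupp.single y 1 ∈ M := by
  classical
  have : Fintype G := Fintype.ofFinite G
  have hxny : x ≠ y := fun h => hxy (by rw [h])
  -- the action and its values
  set act : G → ((G ⧸ H) →₀ ℚ) → ((G ⧸ H) →₀ ℚ) :=
    fun g n => Finsupp.mapDomain (fun z : G ⧸ H => g • z) n with hact
  have hactval : ∀ g n (z : G ⧸ H), act g n z = n (g⁻¹ • z) := by
    intro g n z
    have : (fun z : G ⧸ H => g • z) = ⇑(MulAction.toPerm g) := rfl
    rw [hact]; simp only [this]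
    rw [Finsupp.mapDomain_equiv_apply]
    rfl
  set B : G ⧸ H → G ⧸ H → ℚ := fun p q => ∑ g : G, m (g⁻¹ • p) * m (g⁻¹ • q) with hB
  have hBinv : ∀ (h : G) p q, B (h • p) (h • q) = B p q := by
    intro h p q
    rw [hB]
    refine (Fintype.sum_equiv (Equiv.mulLeft h) _ _ ?_).symm
    intro g
    simp only [Equiv.coe_mulLeft, mul_inv_rev, mul_smul, inv_smul_smul]
  have hBsymm : ∀ p q, B p q = B q p := by
    intro p q; rw [hB]; simp only [mul_comm]
  have hBoff : ∀ p q r s : G ⧸ H, p ≠ q → r ≠ s → B p q = B r s := by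
    intro p q r s hpq hrs
    obtain ⟨σ, hσ⟩ := h2h p q r s hpq hrs
    rw [Set.pair_eq_pair_iff] at hσ
    rcases hσ with ⟨h1, h2⟩ | ⟨h1, h2⟩
    · rw [← h1, ← h2, hBinv]
    · rw [← hBinv σ p q, h1, h2, hBsymm]
  have htrans : ∀ p q : G ⧸ H, ∃ g : G, g • p = q := by
    intro p q
    obtain ⟨a, rfl⟩ := QuotientGroup.mk_surjective p
    obtain ⟨b, rfl⟩ := QuotientGroup.mk_surjective q
    exact ⟨b * a⁻¹, by rw [show (b*a⁻¹) • ((a : G ⧸ H)) = ↑(b*a⁻¹*a) from rfl,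
      inv_mul_cancel_right]⟩
  have hBdiag : ∀ p q : G ⧸ H, B p p = B q q := by
    intro p q
    obtain ⟨g, rfl⟩ := htrans p q
    rw [hBinv]
  set u : (G ⧸ H) →₀ ℚ := ∑ g : G, (m (g⁻¹ • x) - m (g⁻¹ • y)) • act g m with hu
  have humem : u ∈ M := by
    refine Submodule.sum_mem _ fun g _ => Submodule.smul_mem _ _ (hst g m hm)
  have huval : ∀ z, u z = ∑ g : G, (m (g⁻¹ • x) - m (g⁻¹ • y)) * m (g⁻¹ • z) := by
    intro z
    rw [hu, Finsupp.finset_sum_apply]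
    refine Finset.sum_congr rfl fun g _ => ?_
    rw [Finsupp.smul_apply, hactval, smul_eq_mul]
  have huz : ∀ z, z ≠ x → z ≠ y → u z = 0 := by
    intro z hzx hzy
    have : u z = B x z - B y z := by
      rw [huval, hB]
      rw [← Finset.sum_sub_distrib]
      exact Finset.sum_congr rfl fun g _ => by ring
    rw [this, hBoff x z y z (Ne.symm hzx) (Ne.symm hzy), sub_self]
  have hsum : u x + u y = 0 := by
    have : u x + u y = (B x x - B y y) + (B x y - B y x) := by
      rw [huval, huval, hB]
      rw [← Finset.sum_add_distrib]
      rw [show (B x x - B y y) + (B x y - B y x) = (B x x - B y x) + (B x y - B y y) by ring,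
        hB, ← Finset.sum_sub_distrib, ← Finset.sum_sub_distrib, ← Finset.sum_add_distrib]
      exact Finset.sum_congr rfl fun g _ => by ring
    rw [this, hBdiag x y, hBsymm x y]; ring
  have hdiff : 0 < u x - u y := by
    have : u x - u y = ∑ g : G, (m (g⁻¹ • x) - m (g⁻¹ • y))^2 := by
      rw [huval, huval, ← Finset.sum_sub_distrib]
      exact Finset.sum_congr rfl fun g _ => by ring
    rw [this]
    refine Finset.sum_pos' (fun g _ => sq_nonneg _) ⟨1, Finset.mem_univ _, ?_⟩
    simp only [inv_one, one_smul]
    exact pow_pos (abs_pos.mpr (sub_ne_zero.mpr hxy)) 2 |>.trans_eq (by rw [sq_abs]) |>.trans_le le_rfl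
  have hux : u x ≠ 0 := by
    intro h
    rw [h] at hsum hdiff
    rw [zero_add] at hsum
    rw [hsum] at hdiff
    simp at hdiff
  have heq : Finsupp.single x (1:ℚ) - Finsupp.single y 1 = (u x)⁻¹ • u := by
    ext z
    rw [Finsupp.sub_apply, Finsupp.smul_apply, smul_eq_mul]
    by_cases hzx : z = x
    · subst hzx
      rw [Finsupp.single_eq_same, Finsupp.single_eq_of_ne hxny,
        inv_mul_cancel₀ hux, sub_zero]
    · by_cases hzy : z = y
      · have huy : u y = -u x := by linarith
        rw [hzy, Finsupp.single_eq_of_ne hxny.symm, Finsupp.single_eq_same, huy,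
          mul_neg, inv_mul_cancel₀ hux, zero_sub]
      · rw [Finsupp.single_eq_of_ne hzx,
          Finsupp.single_eq_of_ne hzy, huz z hzx hzy, mul_zero, sub_zero]
  rw [heq]
  exact Submodule.smul_mem _ _ humem

lemma adm_lemma {G : Type*} [Group G] [Finite G] (H : Subgroup G)
    {M : Set ((G ⧸ H) →₀ ℚ)} (hadm : IsQAdmissible H M) {x y : G ⧸ H} (hxy : x ≠ y)
    (hmem : Finsupp.single x (1:ℚ) - Finsupp.single y 1 ∈ M) : False := by
  classical
  have : Fintype G := Fintype.ofFinite G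
  obtain ⟨μ, hstab, hrel⟩ := hadm
  obtain ⟨gx, hgx⟩ := QuotientGroup.mk_surjective x
  obtain ⟨gy, hgy⟩ := QuotientGroup.mk_surjective y
  set νx : MonoidAlgebra ℚ G := MonoidAlgebra.single gx 1 * μ with hνx
  set νy : MonoidAlgebra ℚ G := MonoidAlgebra.single gy 1 * μ with hνy
  -- `single g 1 * μ` depends only on the coset of `g`
  have hco : ∀ g g' : G, (g : G ⧸ H) = (g' : G ⧸ H) →
      MonoidAlgebra.single g (1:ℚ) * μ = MonoidAlgebra.single g' 1 * μ := by
    intro g g' h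
    rw [QuotientGroup.eq] at h
    have h1 : MonoidAlgebra.single (g⁻¹ * g') (1:ℚ) * μ = μ := (hstab _).mpr h
    have h2 : MonoidAlgebra.single g' (1:ℚ) =
        MonoidAlgebra.single g 1 * MonoidAlgebra.single (g⁻¹ * g') 1 := by
      rw [MonoidAlgebra.single_mul_single, mul_one, mul_inv_cancel_left]
    rw [h2, mul_assoc, h1]
  set δ : (G ⧸ H) →₀ ℚ := Finsupp.single x 1 - Finsupp.single y 1 with hδ
  have h0 := hrel δ hmem
  rw [finsum_eq_sum_of_fintype] at h0
  have hterm : ∀ g : G, δ (g : G ⧸ H) • (MonoidAlgebra.single g (1:ℚ) * μ) =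
      (if (g : G ⧸ H) = x then νx else 0) - (if (g : G ⧸ H) = y then νy else 0) := by
    intro g
    by_cases h1 : (g : G ⧸ H) = x
    · have h2 : (g : G ⧸ H) ≠ y := h1 ▸ hxy
      have hδg : δ (g : G ⧸ H) = 1 := by
        rw [hδ, Finsupp.sub_apply, h1, Finsupp.single_eq_same,
          Finsupp.single_eq_of_ne hxy, sub_zero]
      rw [hδg, one_smul, if_pos h1, if_neg h2, sub_zero, hνx]
      exact hco g gx (by rw [hgx, h1])
    · by_cases h2 : (g : G ⧸ H) = y
      · have hδg : δ (g : G ⧸ H) = -1 := by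
          rw [hδ, Finsupp.sub_apply, h2, Finsupp.single_eq_of_ne (fun h => hxy h.symm),
            Finsupp.single_eq_same, zero_sub]
        rw [hδg, if_neg h1, if_pos h2, zero_sub, hνy, neg_smul, one_smul, neg_inj]
        exact hco g gy (by rw [hgy, h2])
      · have hδg : δ (g : G ⧸ H) = 0 := by
          rw [hδ, Finsupp.sub_apply, Finsupp.single_eq_of_ne h1,
            Finsupp.single_eq_of_ne h2, sub_zero]
        rw [hδg, zero_smul, if_neg h1, if_neg h2, sub_zero]
  rw [Finset.sum_congr rfl (fun g _ => hterm g), Finset.sum_sub_distrib] at h0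
  rw [← Finset.sum_filter, ← Finset.sum_filter, Finset.sum_const, Finset.sum_const] at h0
  -- the two fibers have the same cardinality
  have hcard : (Finset.univ.filter (fun g : G => (g : G ⧸ H) = x)).card =
      (Finset.univ.filter (fun g : G => (g : G ⧸ H) = y)).card := by
    refine Finset.card_bij (fun g _ => gy * gx⁻¹ * g) ?_ ?_ ?_
    · intro g hg
      simp only [Finset.mem_filter, Finset.mem_univ, true_and] at hg ⊢
      rw [← hgy, QuotientGroup.eq]
      have : ((gx : G ⧸ H)) = g := by rw [hgx, hg]
      rw [QuotientGroup.eq] at this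
      rw [show (gy * gx⁻¹ * g)⁻¹ * gy = (gx⁻¹ * g)⁻¹ by group]
      exact H.inv_mem this
    · intro a ha b hb hab
      exact mul_left_cancel hab
    · intro g' hg'
      simp only [Finset.mem_filter, Finset.mem_univ, true_and] at hg'
      refine ⟨gx * gy⁻¹ * g', ?_, by group⟩
      simp only [Finset.mem_filter, Finset.mem_univ, true_and]
      rw [← hgx, QuotientGroup.eq]
      have : ((gy : G ⧸ H)) = g' := by rw [hgy, hg']
      rw [QuotientGroup.eq] at this
      rw [show (gx * gy⁻¹ * g')⁻¹ * gx = (gy⁻¹ * g')⁻¹ by group]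
      exact H.inv_mem this
  set N := (Finset.univ.filter (fun g : G => (g : G ⧸ H) = x)).card with hN
  rw [← hcard] at h0
  have hNpos : 0 < N := by
    rw [hN, Finset.card_pos]
    exact ⟨gx, by simp [hgx]⟩
  have hνeq : νx = νy := by
    have h0' : (N:ℚ) • νx = (N:ℚ) • νy := by
      have := sub_eq_zero.mp h0
      rwa [← Nat.cast_smul_eq_nsmul ℚ, ← Nat.cast_smul_eq_nsmul ℚ] at this
    exact smul_right_injective _ (Nat.cast_ne_zero.mpr hNpos.ne' : (N:ℚ) ≠ 0) h0'
  -- conclude gy⁻¹ * gx ∈ H, contradicting x ≠ y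
  have : MonoidAlgebra.single (gy⁻¹ * gx) (1:ℚ) * μ = μ := by
    have := congrArg (fun v => MonoidAlgebra.single gy⁻¹ (1:ℚ) * v) hνeq
    simp only [hνx, hνy, ← mul_assoc, MonoidAlgebra.single_mul_single, mul_one,
      inv_mul_cancel] at this
    rwa [← MonoidAlgebra.one_def, one_mul] at this
  have hH : gy⁻¹ * gx ∈ H := (hstab _).mp this
  exact hxy (by rw [← hgx, ← hgy, QuotientGroup.eq.mpr hH])

end Aux

/-- Let `G` be a finite group and `H ≤ G` a subgroup such that `G` acts
faithfully on `G/H`. If the pair `(G,H)` is doubly homogeneous, then it is ℚ-trivial. -/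
theorem statement2 {G : Type*} [Group G] [Finite G] (H : Subgroup G)
    (hfaith : ∀ g : G, (∀ x : G ⧸ H, g • x = x) → g = 1)
    (h2h : PairDoublyHomogeneous H) :
    QTrivialPair H := by
  classical
  intro M hstable hadm
  by_cases hconst : ∀ m ∈ M, ∃ a : ℚ, ∀ z, m z = a
  · by_cases hbot : M = ⊥
    · exact Or.inl hbot
    · right
      obtain ⟨m₀, hm₀M, hm₀⟩ := Submodule.exists_mem_ne_zero_of_ne_bot hbot
      obtain ⟨a₀, ha₀⟩ := hconst m₀ hm₀M
      have ha₀ne : a₀ ≠ 0 := by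
        intro h
        exact hm₀ (Finsupp.ext fun z => by rw [ha₀ z, h, Finsupp.coe_zero, Pi.zero_apply])
      ext m
      constructor
      · intro hm
        exact hconst m hm
      · rintro ⟨a, ha⟩
        have : m = (a / a₀) • m₀ := by
          ext z
          rw [Finsupp.smul_apply, smul_eq_mul, ha z, ha₀ z, div_mul_cancel₀ _ ha₀ne]
        rw [this]
        exact Submodule.smul_mem _ _ hm₀M
  · exfalso
    push_neg at hconst
    obtain ⟨m, hmM, hm⟩ := hconst
    obtain ⟨z, hz⟩ := hm (m ((1 : G) : G ⧸ H))
    have hmem := key_lemma H h2h M hstable hmM hz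
    exact adm_lemma H hadm (fun h => hz (by rw [h])) hmem

end
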